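/- Suppose the cocycle σ is nondegenerate, i.e. for every nonzero m ∈ ℤⁿ there exists k ∈ {1, …, n} with ∏_{j=1}^n θ_{jk}^{m_j} ≠ 1. Let v : ℤⁿ → [1,∞) be any submultiplicative weight (no symmetry or GRS-condition required). Then the Banach algebra ℓ¹_v(ℤⁿ, θ) is simple: every closed two-sided ideal of ℓ¹_v(ℤⁿ, θ) is {0} or all of ℓ¹_v(ℤⁿ, θ). -/

import Mathlib

open scoped BigOperators
open Filter Topology

noncomputable section

/-- The cocycle σ(l,m) = ∏_{1 ≤ j < k ≤ n} θ_{k,j}^{l_k m_j}. -/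
def coc {n : ℕ} (θ : Fin n → Fin n → ℂ) (l m : Fin n → ℤ) : ℂ :=
  ∏ p ∈ Finset.univ.filter (fun p : Fin n × Fin n => p.1 < p.2), θ p.2 p.1 ^ (l p.2 * m p.1)

/-- Twisted convolution (f ♮ g)(x) = Σ_y f(y) g(x−y) σ(y, x−y). -/
def tconv {n : ℕ} (σ : (Fin n → ℤ) → (Fin n → ℤ) → ℂ) (f g : (Fin n → ℤ) → ℂ) :
    (Fin n → ℤ) → ℂ :=
  fun x => ∑' y, f y * g (x - y) * σ y (x - y)

/-- δ_y, the indicator of {y}. -/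
def delta {n : ℕ} (y : Fin n → ℤ) : (Fin n → ℤ) → ℂ := fun x => if x = y then 1 else 0

lemma tconv_delta_left {n : ℕ} (σ : (Fin n → ℤ) → (Fin n → ℤ) → ℂ)
    (y : Fin n → ℤ) (h : (Fin n → ℤ) → ℂ) :
    tconv σ (delta y) h = fun x => h (x - y) * σ y (x - y) := by
  funext x
  unfold tconv
  rw [tsum_eq_single y]
  · simp [delta]
  · intro b hb; simp [delta, hb]

lemma tconv_delta_right {n : ℕ} (σ : (Fin n → ℤ) → (Fin n → ℤ) → ℂ)
    (z : Fin n → ℤ) (h : (Fin n → ℤ) → ℂ) :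
    tconv σ h (delta z) = fun x => h (x - z) * σ (x - z) z := by
  funext x
  unfold tconv
  rw [tsum_eq_single (x - z)]
  · simp [delta]
  · intro b hb
    have : x - b ≠ z := by
      intro hc; apply hb; rw [← hc]; abel
    simp [delta, this]

def Wf {n : ℕ} (θ : Fin n → Fin n → ℂ) (x : Fin n → ℤ) (k : Fin n) : ℂ := ∏ j, θ k j ^ (x j)

variable {n : ℕ} {θ : Fin n → Fin n → ℂ}

lemma Wf_ne (hθne : ∀ j k, θ j k ≠ 0) (x : Fin n → ℤ) (k : Fin n) : Wf θ x k ≠ 0 :=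
  Finset.prod_ne_zero_iff.mpr fun j _ => zpow_ne_zero _ (hθne k j)

lemma Wf_norm (hUnit : ∀ j k, ‖θ j k‖ = 1) (x : Fin n → ℤ) (k : Fin n) : ‖Wf θ x k‖ = 1 := by
  rw [Wf, norm_prod]
  apply Finset.prod_eq_one
  intro j _
  rw [norm_zpow, hUnit k j, one_zpow]

lemma Wf_zero (k : Fin n) : Wf θ 0 k = 1 := by
  simp [Wf]

lemma Wf_sub (hθne : ∀ j k, θ j k ≠ 0) (x m : Fin n → ℤ) (k : Fin n) :
    Wf θ (x - m) k = Wf θ x k * (Wf θ m k)⁻¹ := by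
  rw [Wf, Wf, Wf, ← Finset.prod_inv_distrib, ← Finset.prod_mul_distrib]
  apply Finset.prod_congr rfl
  intro j _
  rw [Pi.sub_apply, zpow_sub₀ (hθne k j), div_eq_mul_inv]

lemma coc_ne_zero (hθne : ∀ j k, θ j k ≠ 0) (l m : Fin n → ℤ) : coc θ l m ≠ 0 :=
  Finset.prod_ne_zero_iff.mpr fun p _ => zpow_ne_zero _ (hθne p.2 p.1)

lemma coc_zero_right (l : Fin n → ℤ) : coc θ l (0 : Fin n → ℤ) = 1 := by
  simp [coc]

lemma double_prod_eq (hθne : ∀ j k, θ j k ≠ 0) (hθinv : ∀ j k, (θ j k)⁻¹ = θ k j)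
    (hDiag : ∀ j, θ j j = 1) (x y : Fin n → ℤ) :
    ∏ k, Wf θ x k ^ (y k)
      = ∏ p ∈ Finset.univ.filter (fun p : Fin n × Fin n => p.1 < p.2),
          θ p.2 p.1 ^ (x p.1 * y p.2 + -(x p.2 * y p.1)) := by
  classical
  have step1 : ∏ k, Wf θ x k ^ (y k) = ∏ k, ∏ j, θ k j ^ (x j * y k) := by
    apply Finset.prod_congr rfl
    intro k _
    rw [Wf, ← Finset.prod_zpow]
    exact Finset.prod_congr rfl fun j _ => (zpow_mul _ _ _).symm
  have step2 : ∏ k, ∏ j, θ k j ^ (x j * y k)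
      = ∏ p : Fin n × Fin n, θ p.1 p.2 ^ (x p.2 * y p.1) :=
    (Fintype.prod_prod_type fun p : Fin n × Fin n => θ p.1 p.2 ^ (x p.2 * y p.1)).symm
  set F : Fin n × Fin n → ℂ := fun p => θ p.1 p.2 ^ (x p.2 * y p.1) with hF
  have split1 : ∏ p : Fin n × Fin n, F p
      = (∏ p ∈ Finset.univ.filter (fun p : Fin n × Fin n => p.1 < p.2), F p)
        * ∏ p ∈ Finset.univ.filter (fun p : Fin n × Fin n => ¬ p.1 < p.2), F p :=
    (Finset.prod_filter_mul_prod_filter_not _ _ _).symm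
  have split2 : ∏ p ∈ Finset.univ.filter (fun p : Fin n × Fin n => ¬ p.1 < p.2), F p
      = (∏ p ∈ Finset.univ.filter (fun p : Fin n × Fin n => p.2 < p.1), F p) := by
    rw [← Finset.prod_filter_mul_prod_filter_not
      (Finset.univ.filter (fun p : Fin n × Fin n => ¬ p.1 < p.2))
      (fun p : Fin n × Fin n => p.2 < p.1) F]
    have h1 : (Finset.univ.filter (fun p : Fin n × Fin n => ¬ p.1 < p.2)).filter
        (fun p : Fin n × Fin n => p.2 < p.1)
        = Finset.univ.filter (fun p : Fin n × Fin n => p.2 < p.1) := by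
      rw [Finset.filter_filter]
      apply Finset.filter_congr
      intro p _
      constructor
      · exact fun hp => hp.2
      · exact fun hp => ⟨by omega, hp⟩
    have h2 : ∏ p ∈ (Finset.univ.filter (fun p : Fin n × Fin n => ¬ p.1 < p.2)).filter
        (fun p : Fin n × Fin n => ¬ p.2 < p.1), F p = 1 := by
      apply Finset.prod_eq_one
      intro p hp
      simp only [Finset.mem_filter] at hp
      have : p.1 = p.2 := by omega
      rw [hF]
      simp only
      rw [← this, hDiag, one_zpow]
    rw [h1, h2, mul_one]
  have swapped : ∏ p ∈ Finset.univ.filter (fun p : Fin n × Fin n => p.2 < p.1), F p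
      = ∏ p ∈ Finset.univ.filter (fun p : Fin n × Fin n => p.1 < p.2), F p.swap := by
    apply Finset.prod_nbij' (fun p => p.swap) (fun p => p.swap)
    · intro a ha; simp only [Finset.mem_filter, Finset.mem_univ, true_and] at ha ⊢; exact ha
    · intro a ha; simp only [Finset.mem_filter, Finset.mem_univ, true_and] at ha ⊢; exact ha
    · intro a _; simp
    · intro a _; simp
    · intro a _; simp
  rw [step1, step2, split1, split2, swapped, ← Finset.prod_mul_distrib]
  apply Finset.prod_congr rfl
  intro p _
  rw [hF]
  simp only [Prod.fst_swap, Prod.snd_swap]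
  rw [← hθinv p.2 p.1, inv_zpow, ← zpow_neg, ← zpow_add₀ (hθne p.2 p.1)]
  congr 1
  ring

lemma phase_eq (hθne : ∀ j k, θ j k ≠ 0) (hθinv : ∀ j k, (θ j k)⁻¹ = θ k j)
    (hDiag : ∀ j, θ j j = 1) (y x : Fin n → ℤ) :
    coc θ y x * coc θ (x + y) (-y) = coc θ y (-y) * ∏ k, Wf θ x k ^ (y k) := by
  rw [double_prod_eq hθne hθinv hDiag x y, coc, coc, coc,
    ← Finset.prod_mul_distrib, ← Finset.prod_mul_distrib]
  apply Finset.prod_congr rfl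
  intro p _
  rw [← zpow_add₀ (hθne p.2 p.1), ← zpow_add₀ (hθne p.2 p.1)]
  congr 1
  simp only [Pi.add_apply, Pi.neg_apply]
  ring
def sAvg (z : ℂ) (N : ℕ) : ℂ := (∑ t ∈ Finset.range N, z ^ t) / N

lemma sAvg_one (N : ℕ) (hN : N ≠ 0) : sAvg 1 N = 1 := by
  have : ∑ t ∈ Finset.range N, (1:ℂ) ^ t = N := by simp
  rw [sAvg, this, div_self (by exact_mod_cast hN)]

lemma sAvg_tendsto (z : ℂ) (hz : ‖z‖ = 1) (hz1 : z ≠ 1) :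
    Tendsto (sAvg z) atTop (𝓝 0) := by
  have hzne : ‖z - 1‖ ≠ 0 := by
    simpa [sub_eq_zero] using hz1
  have hb : ∀ N : ℕ, ‖sAvg z N‖ ≤ (2 / ‖z - 1‖) / N := by
    intro N
    rw [sAvg, norm_div, geom_sum_eq hz1, norm_div]
    simp only [Complex.norm_natCast]
    gcongr
    calc ‖z ^ N - 1‖ ≤ ‖z ^ N‖ + ‖(1:ℂ)‖ := norm_sub_le _ _
      _ = 2 := by simp [norm_pow, hz]; norm_num
  have hlim : Tendsto (fun N : ℕ => (2 / ‖z - 1‖) / N) atTop (𝓝 0) :=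
    tendsto_const_div_atTop_nhds_zero_nat _
  exact squeeze_zero_norm hb hlim

lemma sAvg_norm_le (z : ℂ) (hz : ‖z‖ = 1) (N : ℕ) : ‖sAvg z N‖ ≤ 1 := by
  rcases Nat.eq_zero_or_pos N with rfl | hN
  · simp [sAvg]
  · rw [sAvg, norm_div]
    rw [div_le_one (by simpa using hN : (0:ℝ) < ‖(N:ℂ)‖)]
    calc ‖∑ t ∈ Finset.range N, z ^ t‖ ≤ ∑ t ∈ Finset.range N, ‖z ^ t‖ := norm_sum_le _ _
      _ = N := by simp [norm_pow, hz]
      _ = ‖(N:ℂ)‖ := by simp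

def avgF {n : ℕ} (θ : Fin n → Fin n → ℂ) (N : ℕ) (d : Fin n → ℤ) : ℂ :=
  ∏ k, sAvg (Wf θ d k) N

lemma avgF_norm_le (hUnit : ∀ j k, ‖θ j k‖ = 1) (N : ℕ) (d : Fin n → ℤ) :
    ‖avgF θ N d‖ ≤ 1 := by
  rw [avgF, norm_prod]
  apply Finset.prod_le_one
  · intro k _; exact norm_nonneg _
  · intro k _; exact sAvg_norm_le _ (Wf_norm hUnit d k) N

lemma avgF_zero (N : ℕ) (hN : N ≠ 0) : avgF θ N (0 : Fin n → ℤ) = 1 := by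
  rw [avgF]
  apply Finset.prod_eq_one
  intro k _
  rw [Wf_zero, sAvg_one N hN]

lemma avgF_tendsto (hUnit : ∀ j k, ‖θ j k‖ = 1) {d : Fin n → ℤ} (k₀ : Fin n)
    (hk : Wf θ d k₀ ≠ 1) : Tendsto (fun N => avgF θ N d) atTop (𝓝 0) := by
  refine squeeze_zero_norm (a := fun N => ‖sAvg (Wf θ d k₀) N‖) (fun N => ?_) ?_
  · 
    rw [avgF, norm_prod, ← Finset.mul_prod_erase Finset.univ _ (Finset.mem_univ k₀)]
    apply mul_le_of_le_one_right (norm_nonneg _)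
    apply Finset.prod_le_one
    · intro k _; exact norm_nonneg _
    · intro k _; exact sAvg_norm_le _ (Wf_norm hUnit d k) N
  · simpa using (sAvg_tendsto _ (Wf_norm hUnit d k₀) hk).norm

lemma avgF_eq_sum (N : ℕ) (d : Fin n → ℤ) :
    avgF θ N d = (∑ t ∈ Fintype.piFinset (fun _ : Fin n => Finset.range N),
      ∏ k, Wf θ d k ^ ((t k : ℤ))) / (N : ℂ) ^ n := by
  classical
  rw [avgF]
  simp only [sAvg]
  rw [Finset.prod_div_distrib, Finset.prod_const, Finset.card_univ, Fintype.card_fin,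
    Finset.prod_univ_sum]
  congr 1

/-- if the cocycle σ is nondegenerate, then for any submultiplicative
weight v the Banach algebra ℓ¹_v(ℤⁿ, θ) is simple: every closed two-sided ideal I
(a norm-closed linear subspace of ℓ¹_v that absorbs twisted convolution on both
sides) is {0} or all of ℓ¹_v. -/
theorem statement12 {n : ℕ} (θ : Fin n → Fin n → ℂ)
    (hUnit : ∀ j k, ‖θ j k‖ = 1)
    (hHerm : ∀ j k, θ k j = starRingEnd ℂ (θ j k))
    (hDiag : ∀ j, θ j j = 1)
    (hNondeg : ∀ m : Fin n → ℤ, m ≠ 0 → ∃ k : Fin n, (∏ j : Fin n, θ j k ^ (m j)) ≠ 1)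
    (v : (Fin n → ℤ) → ℝ)
    (hv1 : ∀ x, 1 ≤ v x)
    (hvsub : ∀ x y, v (x + y) ≤ v x * v y)
    (I : Set ((Fin n → ℤ) → ℂ))
    -- I consists of ℓ¹_v functions
    (hIsub : ∀ h ∈ I, Summable (fun x => ‖h x‖ * v x))
    -- I is a linear subspace
    (hI0 : (fun _ => (0 : ℂ)) ∈ I)
    (hIadd : ∀ h₁ ∈ I, ∀ h₂ ∈ I, (fun x => h₁ x + h₂ x) ∈ I)
    (hIsmul : ∀ c : ℂ, ∀ h ∈ I, (fun x => c * h x) ∈ I)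
    -- I is closed in the ℓ¹_v-norm
    (hIclosed : ∀ f : (Fin n → ℤ) → ℂ, Summable (fun x => ‖f x‖ * v x) →
      (∀ ε > (0:ℝ), ∃ h ∈ I, (∑' x, ‖f x - h x‖ * v x) < ε) → f ∈ I)
    -- I is a two-sided ideal for twisted convolution
    (hIideal : ∀ f : (Fin n → ℤ) → ℂ, Summable (fun x => ‖f x‖ * v x) →
      ∀ h ∈ I, tconv (coc θ) f h ∈ I ∧ tconv (coc θ) h f ∈ I) :
    (∀ h ∈ I, h = fun _ => (0 : ℂ)) ∨
      (∀ f : (Fin n → ℤ) → ℂ, Summable (fun x => ‖f x‖ * v x) → f ∈ I) := by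
  classical
  by_cases htriv : ∀ h ∈ I, h = fun _ => (0 : ℂ)
  · exact Or.inl htriv
  right
  push_neg at htriv
  obtain ⟨h, hI, hne0⟩ := htriv
  obtain ⟨m, hm⟩ : ∃ m, h m ≠ 0 := by
    by_contra hc
    push_neg at hc
    exact hne0 (funext hc)
  -- basic facts
  have hv0 : ∀ x, (0:ℝ) ≤ v x := fun x => le_trans zero_le_one (hv1 x)
  have hθne : ∀ j k, θ j k ≠ 0 := by
    intro j k hc
    have := hUnit j k
    rw [hc, norm_zero] at this
    norm_num at this
  have hθinv : ∀ j k, (θ j k)⁻¹ = θ k j := by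
    intro j k
    apply inv_eq_of_mul_eq_one_right
    have h1 : Complex.normSq (θ j k) = 1 := by
      rw [Complex.normSq_eq_norm_sq, hUnit j k, one_pow]
    rw [hHerm j k, Complex.mul_conj, h1, Complex.ofReal_one]
  have hdsum : ∀ y : Fin n → ℤ, Summable (fun x => ‖delta y x‖ * v x) := by
    intro y
    apply summable_of_ne_finset_zero (s := {y})
    intro x hx
    simp only [Finset.mem_singleton] at hx
    simp [delta, hx]
  -- conjugated elements
  have hgmem : ∀ y : Fin n → ℤ,
      tconv (coc θ) (tconv (coc θ) (delta y) h) (delta (-y)) ∈ I := by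
    intro y
    exact (hIideal (delta (-y)) (hdsum (-y)) _ ((hIideal (delta y) (hdsum y) h hI).1)).2
  have hgval : ∀ (y x : Fin n → ℤ),
      tconv (coc θ) (tconv (coc θ) (delta y) h) (delta (-y)) x
        = h x * (coc θ y (-y) * ∏ k, Wf θ x k ^ (y k)) := by
    intro y x
    rw [tconv_delta_right, tconv_delta_left]
    simp only [sub_neg_eq_add, add_sub_cancel_right]
    rw [mul_assoc, phase_eq hθne hθinv hDiag y x]
  have hPne : ∀ (y w : Fin n → ℤ), (∏ k, Wf θ w k ^ (y k)) ≠ 0 := fun y w =>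
    Finset.prod_ne_zero_iff.mpr fun k _ => zpow_ne_zero _ (Wf_ne hθne w k)
  have hP_sub : ∀ (y x : Fin n → ℤ), ∏ k, Wf θ (x - m) k ^ (y k)
      = (∏ k, Wf θ x k ^ (y k)) * (∏ k, Wf θ m k ^ (y k))⁻¹ := by
    intro y x
    rw [← Finset.prod_inv_distrib, ← Finset.prod_mul_distrib]
    apply Finset.prod_congr rfl
    intro k _
    rw [Wf_sub hθne, mul_zpow, inv_zpow]
  set lam : (Fin n → ℤ) → ℂ :=
    fun y => (coc θ y (-y) * ∏ k, Wf θ m k ^ (y k))⁻¹ with hlam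
  have hconj : ∀ (y x : Fin n → ℤ),
      lam y * tconv (coc θ) (tconv (coc θ) (delta y) h) (delta (-y)) x
        = h x * ∏ k, Wf θ (x - m) k ^ (y k) := by
    intro y x
    rw [hgval y x, hP_sub y x, hlam]
    have hc := coc_ne_zero hθne y (-y)
    have hp := hPne y m
    field_simp
  -- closure of I under finite sums
  have hIsum : ∀ (s : Finset (Fin n → ℕ)) (F : (Fin n → ℕ) → (Fin n → ℤ) → ℂ),
      (∀ a ∈ s, F a ∈ I) → (fun x => ∑ a ∈ s, F a x) ∈ I := by
    intro s
    induction s using Finset.induction_on with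
    | empty => intro F _; simpa using hI0
    | @insert a s ha ih =>
        intro F hF
        have h1 := hIadd _ (hF a (Finset.mem_insert_self a s)) _
          (ih F fun b hb => hF b (Finset.mem_insert_of_mem hb))
        have h2 : (fun x => F a x + ∑ b ∈ s, F b x)
            = fun x => ∑ b ∈ insert a s, F b x := by
          funext x; rw [Finset.sum_insert ha]
        rwa [h2] at h1
  -- the averaged elements
  set A : ℕ → (Fin n → ℤ) → ℂ := fun N x =>
    ∑ t ∈ Fintype.piFinset (fun _ : Fin n => Finset.range N),
      (((N:ℂ) ^ n)⁻¹ * lam (fun i => (t i : ℤ))) *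
        tconv (coc θ) (tconv (coc θ) (delta (fun i => (t i : ℤ))) h)
          (delta (-(fun i => (t i : ℤ)))) x with hA
  have hAmem : ∀ N, A N ∈ I := by
    intro N
    apply hIsum
    intro t _
    exact hIsmul _ _ (hgmem _)
  have hAval : ∀ N x, A N x = h x * avgF θ N (x - m) := by
    intro N x
    have step : A N x = ((N:ℂ) ^ n)⁻¹ *
        ∑ t ∈ Fintype.piFinset (fun _ : Fin n => Finset.range N),
          (h x * ∏ k, Wf θ (x - m) k ^ ((t k : ℤ))) := by
      rw [hA, Finset.mul_sum]
      apply Finset.sum_congr rfl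
      intro t _
      rw [mul_assoc, hconj (fun i => ((t i : ℤ))) x]
    rw [step, ← Finset.mul_sum, avgF_eq_sum, div_eq_mul_inv]
    ring
  -- summability of the target
  have hf0sum : Summable (fun x => ‖h m * delta m x‖ * v x) := by
    apply summable_of_ne_finset_zero (s := {m})
    intro x hx
    simp only [Finset.mem_singleton] at hx
    simp [delta, hx]
  -- pointwise convergence
  have hpt : ∀ x, Tendsto
      (fun N : ℕ => ‖h x * avgF θ N (x - m) - h m * delta m x‖ * v x) atTop (𝓝 0) := by
    intro x
    by_cases hx : x = m
    · subst hx
      refine Tendsto.congr' ?_ (tendsto_const_nhds : Tendsto (fun _ : ℕ => (0:ℝ)) atTop (𝓝 0))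
      filter_upwards [eventually_ge_atTop 1] with N hN
      rw [sub_self, avgF_zero N (by omega)]
      simp [delta]
    · have hdm : delta m x = 0 := by simp [delta, hx]
      have hd : (x - m) ≠ 0 := fun hc => hx (by rwa [sub_eq_zero] at hc)
      obtain ⟨k₀, hk₀⟩ := hNondeg (x - m) hd
      have hW : Wf θ (x - m) k₀ ≠ 1 := by
        intro hc
        apply hk₀
        have hWc : Wf θ (x - m) k₀
            = (starRingEnd ℂ) (∏ j, θ j k₀ ^ ((x - m) j)) := by
          rw [Wf, map_prod]
          apply Finset.prod_congr rfl
          intro j _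
          rw [map_zpow₀, ← hHerm j k₀]
        rw [hWc] at hc
        have := congrArg (starRingEnd ℂ) hc
        rwa [Complex.conj_conj, map_one] at this
      have hA0 := avgF_tendsto hUnit k₀ hW
      have h1 : Tendsto (fun N : ℕ => h x * avgF θ N (x - m) - h m * delta m x)
          atTop (𝓝 0) := by
        simp only [hdm, mul_zero, sub_zero]
        simpa using hA0.const_mul (h x)
      simpa using (h1.norm).mul_const (v x)
  -- dominated convergence
  have hbound : Summable (fun x => ‖h x‖ * v x + ‖h m * delta m x‖ * v x) :=
    (hIsub h hI).add hf0sum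
  have hE : Tendsto (fun N => ∑' x, ‖h x * avgF θ N (x - m) - h m * delta m x‖ * v x)
      atTop (𝓝 0) := by
    have hmain := tendsto_tsum_of_dominated_convergence
      (f := fun (N : ℕ) (x : Fin n → ℤ) =>
        ‖h x * avgF θ N (x - m) - h m * delta m x‖ * v x)
      (g := fun _ => (0:ℝ))
      (bound := fun x => ‖h x‖ * v x + ‖h m * delta m x‖ * v x)
      hbound hpt ?_
    · simpa using hmain
    · apply Filter.Eventually.of_forall
      intro N x
      rw [Real.norm_eq_abs, abs_of_nonneg (mul_nonneg (norm_nonneg _) (hv0 x))]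
      have hstep : ‖h x * avgF θ N (x - m) - h m * delta m x‖
          ≤ ‖h x‖ + ‖h m * delta m x‖ := by
        calc ‖h x * avgF θ N (x - m) - h m * delta m x‖
            ≤ ‖h x * avgF θ N (x - m)‖ + ‖h m * delta m x‖ := norm_sub_le _ _
          _ ≤ ‖h x‖ + ‖h m * delta m x‖ := by
              gcongr
              rw [norm_mul]
              exact mul_le_of_le_one_right (norm_nonneg _) (avgF_norm_le hUnit N (x - m))
      calc ‖h x * avgF θ N (x - m) - h m * delta m x‖ * v x
          ≤ (‖h x‖ + ‖h m * delta m x‖) * v x :=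
            mul_le_mul_of_nonneg_right hstep (hv0 x)
        _ = ‖h x‖ * v x + ‖h m * delta m x‖ * v x := by ring
  -- the target is in I
  have hf0 : (fun x => h m * delta m x) ∈ I := by
    apply hIclosed _ hf0sum
    intro ε hε
    obtain ⟨N, hN⟩ := (hE.eventually_lt_const hε).exists
    refine ⟨A N, hAmem N, ?_⟩
    have heq : ∀ x, ‖h m * delta m x - A N x‖ * v x
        = ‖h x * avgF θ N (x - m) - h m * delta m x‖ * v x := by
      intro x; rw [hAval N x, norm_sub_rev]
    calc (∑' x, ‖h m * delta m x - A N x‖ * v x)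
        = ∑' x, ‖h x * avgF θ N (x - m) - h m * delta m x‖ * v x :=
          tsum_congr heq
      _ < ε := hN
  -- delta m is in I
  have hδm : delta m ∈ I := by
    have h1 := hIsmul (h m)⁻¹ _ hf0
    have h2 : (fun x => (h m)⁻¹ * (h m * delta m x)) = delta m := by
      funext x; rw [← mul_assoc, inv_mul_cancel₀ hm, one_mul]
    rwa [h2] at h1
  -- delta 0 is in I
  have hδ0 : delta (0 : Fin n → ℤ) ∈ I := by
    have h1 := (hIideal (delta (-m)) (hdsum (-m)) (delta m) hδm).1
    rw [tconv_delta_left] at h1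
    have h2 := hIsmul (coc θ (-m) m)⁻¹ _ h1
    have h3 : (fun x => (coc θ (-m) m)⁻¹ * (delta m (x - -m) * coc θ (-m) (x - -m)))
        = delta (0 : Fin n → ℤ) := by
      funext x
      by_cases hx : x = 0
      · subst hx
        have e : (0 : Fin n → ℤ) - -m = m := by abel
        rw [e]
        simp [delta, inv_mul_cancel₀ (coc_ne_zero hθne (-m) m)]
      · have e : x - -m ≠ m := by
          intro hc
          apply hx
          have : x - -m - m = m - m := by rw [hc]
          simpa using this
        simp [delta, e, hx]
    rwa [h3] at h2
  -- conclude
  intro f hf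
  have h1 := (hIideal f hf (delta 0) hδ0).1
  rw [tconv_delta_right] at h1
  have h2 : (fun x => f (x - 0) * coc θ (x - 0) (0 : Fin n → ℤ)) = f := by
    funext x; rw [sub_zero, coc_zero_right, mul_one]
  rwa [h2] at h1
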